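/- A smooth vector field V on P̃ = ℝ^{2n+2} is a Killing field of G̃ (i.e. ℒ_V G̃ = 0) if and only if there exist real constants ν^s, η^i_j, k^i (i, j, s = 0,…,n) such that V = Σ_s ν^s X_s + Σ_{i,j} η^i_j Q^i_j + Σ_i k^i D^i, where X_s = ∂_{x^s}, Q^i_j = x^i ∂_{x^j} − p_j ∂_{p_i}, D^i = (x^i/2) Q + (1 − ½ Σ_l x^l p_l) ∂_{p_i}, and Q = Σ_s (x^s ∂_{x^s} − p_s ∂_{p_s}). -/

import Mathlib

set_option linter.unusedSectionVars false


/-!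
Statement 14: A smooth vector field `V` on `P̃ = ℝ^{2n+2}` is a Killing field of `G̃`
iff it is a constant-coefficient combination of `X_s = ∂_{x^s}`,
`Q^i_j = x^i ∂_{x^j} - p_j ∂_{p_i}` and
`D^i = (x^i/2) Q + (1 - ½ Σ_l x^l p_l) ∂_{p_i}`, where
`Q = Σ_s (x^s ∂_{x^s} - p_s ∂_{p_s})`.
-/

abbrev Idx2 (n : ℕ) : Type := Fin (n + 1) ⊕ Fin (n + 1)
abbrev Pt2 (n : ℕ) : Type := Idx2 n → ℝ

/-- The lifted metric `G̃ = [[0, I], [I, p pᵀ]]`, block ordering `(p; x)`. -/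
def Gt (n : ℕ) (m : Pt2 n) : Matrix (Idx2 n) (Idx2 n) ℝ :=
  Matrix.of fun a b =>
    match a, b with
    | Sum.inl _, Sum.inl _ => 0
    | Sum.inl i, Sum.inr j => if i = j then 1 else 0
    | Sum.inr i, Sum.inl j => if i = j then 1 else 0
    | Sum.inr i, Sum.inr j => m (Sum.inl i) * m (Sum.inl j)

/-- Partial derivative `∂_a f (m)` of a scalar function on `P̃`. -/
noncomputable def pd {n : ℕ} (f : Pt2 n → ℝ) (m : Pt2 n) (a : Idx2 n) : ℝ :=
  fderiv ℝ f m (Pi.single a 1)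

/-- Components of the Lie derivative `(ℒ_V G̃)_{αβ}`. -/
noncomputable def lieDerivGt (n : ℕ) (V : Pt2 n → Pt2 n) (m : Pt2 n)
    (α β : Idx2 n) : ℝ :=
  ∑ γ, (V m γ * pd (fun m' => Gt n m' α β) m γ
    + Gt n m γ β * pd (fun m' => V m' γ) m α
    + Gt n m α γ * pd (fun m' => V m' γ) m β)

/-- `X_s = ∂_{x^s}`. -/
noncomputable def XsVF (n : ℕ) (s : Fin (n + 1)) : Pt2 n → Pt2 n :=
  fun _ => Pi.single (Sum.inr s) 1

/-- `Q^i_j = x^i ∂_{x^j} - p_j ∂_{p_i}`. -/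
noncomputable def QijVF (n : ℕ) (i j : Fin (n + 1)) : Pt2 n → Pt2 n := fun m =>
  m (Sum.inr i) • (Pi.single (Sum.inr j) 1 : Pt2 n) -
    m (Sum.inl j) • (Pi.single (Sum.inl i) 1 : Pt2 n)

/-- The hyperbolic-rotation generator `Q = Σ_s (x^s ∂_{x^s} - p_s ∂_{p_s})`. -/
noncomputable def QVF (n : ℕ) : Pt2 n → Pt2 n := fun m a =>
  match a with
  | Sum.inl l => -m (Sum.inl l)
  | Sum.inr l => m (Sum.inr l)

/-- `D^i = (x^i/2) Q + (1 - ½ Σ_l x^l p_l) ∂_{p_i}`. -/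
noncomputable def DiVF (n : ℕ) (i : Fin (n + 1)) : Pt2 n → Pt2 n := fun m =>
  (m (Sum.inr i) / 2) • QVF n m +
    (1 - (1 / 2 : ℝ) * ∑ l, m (Sum.inr l) * m (Sum.inl l)) •
      (Pi.single (Sum.inl i) 1 : Pt2 n)

namespace KillingAux
variable {n : ℕ}

lemma pd_const (c : ℝ) (m : Pt2 n) (a : Idx2 n) : pd (fun _ => c) m a = 0 := by
  simp [pd]

lemma pd_coord (b : Idx2 n) (m : Pt2 n) (a : Idx2 n) :
    pd (fun m' => m' b) m a = if b = a then 1 else 0 := by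
  have : (fun m' : Pt2 n => m' b) = (ContinuousLinearMap.proj b : Pt2 n →L[ℝ] ℝ) := rfl
  rw [pd, this, ContinuousLinearMap.fderiv]
  simp [Pi.single_apply, eq_comm]

lemma pd_add {f g : Pt2 n → ℝ} (hf : DifferentiableAt ℝ f m) (hg : DifferentiableAt ℝ g m)
    (a : Idx2 n) : pd (fun m' => f m' + g m') m a = pd f m a + pd g m a := by
  simp [pd, fderiv_fun_add hf hg]

lemma pd_sub {f g : Pt2 n → ℝ} (hf : DifferentiableAt ℝ f m) (hg : DifferentiableAt ℝ g m)
    (a : Idx2 n) : pd (fun m' => f m' - g m') m a = pd f m a - pd g m a := by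
  simp [pd, fderiv_fun_sub hf hg]

lemma pd_neg {f : Pt2 n → ℝ} (m : Pt2 n) (a : Idx2 n) :
    pd (fun m' => -f m') m a = -pd f m a := by
  simp [pd, fderiv_neg]

lemma pd_mul {f g : Pt2 n → ℝ} (hf : DifferentiableAt ℝ f m) (hg : DifferentiableAt ℝ g m)
    (a : Idx2 n) : pd (fun m' => f m' * g m') m a = pd f m a * g m + f m * pd g m a := by
  simp [pd, fderiv_fun_mul hf hg]; ring

lemma pd_const_mul {f : Pt2 n → ℝ} (hf : DifferentiableAt ℝ f m) (c : ℝ)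
    (a : Idx2 n) : pd (fun m' => c * f m') m a = c * pd f m a := by
  simp [pd, fderiv_const_mul hf]

lemma pd_div_const {f : Pt2 n → ℝ} (hf : DifferentiableAt ℝ f m) (c : ℝ)
    (a : Idx2 n) : pd (fun m' => f m' / c) m a = pd f m a / c := by
  simp [pd, div_eq_mul_inv, fderiv_mul_const hf, mul_comm]

lemma pd_sum {ι : Type*} (s : Finset ι) {f : ι → Pt2 n → ℝ} {m : Pt2 n}
    (hf : ∀ i ∈ s, DifferentiableAt ℝ (f i) m) (a : Idx2 n) :
    pd (fun m' => ∑ i ∈ s, f i m') m a = ∑ i ∈ s, pd (f i) m a := by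
  simp [pd, fderiv_fun_sum hf]

lemma fderiv_eq_sum_pd (f : Pt2 n → ℝ) (y d : Pt2 n) :
    fderiv ℝ f y d = ∑ a, d a * pd f y a := by
  conv_lhs => rw [← Finset.univ_sum_single d]
  rw [map_sum]
  refine Finset.sum_congr rfl fun a _ => ?_
  have : Pi.single a (d a) = d a • (Pi.single a 1 : Pt2 n) := by
    funext j
    by_cases h : j = a <;> simp [Pi.single_apply, h]
  rw [this, map_smul, smul_eq_mul, pd]

lemma contDiff_pd {f : Pt2 n → ℝ} (hf : ContDiff ℝ (⊤ : ℕ∞) f) (a : Idx2 n) :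
    ContDiff ℝ (⊤ : ℕ∞) (fun m => pd f m a) :=
  (hf.fderiv_right (m := (⊤ : ℕ∞)) le_rfl).clm_apply contDiff_const

lemma pd_clm (f : Pt2 n → ℝ) (hf : DifferentiableAt ℝ (fderiv ℝ f) m) (a b : Idx2 n) :
    pd (fun m' => pd f m' a) m b = fderiv ℝ (fderiv ℝ f) m (Pi.single b 1) (Pi.single a 1) := by
  unfold pd
  rw [fderiv_clm_apply hf (differentiableAt_const _)]
  simp

lemma clairaut {f : Pt2 n → ℝ} (hf : ContDiff ℝ (⊤ : ℕ∞) f) (m : Pt2 n) (a b : Idx2 n) :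
    pd (fun m' => pd f m' a) m b = pd (fun m' => pd f m' b) m a := by
  have hdf : DifferentiableAt ℝ (fderiv ℝ f) m :=
    ((hf.fderiv_right (m := (⊤ : ℕ∞)) le_rfl).differentiable (by simp)) m
  rw [pd_clm f hdf, pd_clm f hdf]
  exact (hf.contDiffAt.isSymmSndFDerivAt (by rw [minSmoothness_of_isRCLikeNormedField]; exact WithTop.coe_le_coe.mpr (le_top : (2 : ℕ∞) ≤ ⊤))) _ _


lemma const_of_pd_zero {f : Pt2 n → ℝ} (hf : Differentiable ℝ f)
    (h : ∀ m a, pd f m a = 0) (m m' : Pt2 n) : f m = f m' := by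
  refine is_const_of_fderiv_eq_zero hf (fun x => ?_) m m'
  refine ContinuousLinearMap.ext fun v => ?_
  rw [fderiv_eq_sum_pd]
  simp [h]

/-- Replace the `p`-part of `m` by `q`. -/
def updP (m : Pt2 n) (q : Fin (n+1) → ℝ) : Pt2 n := Sum.elim q (fun k => m (Sum.inr k))

@[simp] lemma updP_inl (m : Pt2 n) (q : Fin (n+1) → ℝ) (k : Fin (n+1)) :
    updP m q (Sum.inl k) = q k := rfl
@[simp] lemma updP_inr (m : Pt2 n) (q : Fin (n+1) → ℝ) (k : Fin (n+1)) :
    updP m q (Sum.inr k) = m (Sum.inr k) := rfl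

lemma pconst_eval {f : Pt2 n → ℝ} (hf : Differentiable ℝ f)
    (h : ∀ m l, pd f m (Sum.inl l) = 0) (m : Pt2 n) (q : Fin (n+1) → ℝ) :
    f (updP m q) = f m := by
  set d : Pt2 n := updP m q - m with hd
  have hdinr : ∀ k, d (Sum.inr k) = 0 := by intro k; simp [hd]
  have hline : ∀ t : ℝ, HasDerivAt (fun t : ℝ => f (m + t • d)) 0 t := by
    intro t
    have h1 : HasDerivAt (fun t : ℝ => m + t • d) d t := by
      simpa using ((hasDerivAt_id t).smul_const d).const_add m
    have h2 := (hf (m + t • d)).hasFDerivAt.comp_hasDerivAt t h1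
    have h3 : fderiv ℝ f (m + t • d) d = 0 := by
      rw [fderiv_eq_sum_pd, Fintype.sum_sum_type]
      simp [h, hdinr]
    rwa [h3] at h2
  have hconst : (fun t : ℝ => f (m + t • d)) 1 = (fun t : ℝ => f (m + t • d)) 0 :=
    is_const_of_deriv_eq_zero (fun t => (hline t).differentiableAt)
      (fun t => (hline t).deriv) 1 0
  have he : m + d = updP m q := by simp [hd]
  simpa [he] using hconst


@[simp] lemma Gt_ll (m : Pt2 n) (i j : Fin (n+1)) : Gt n m (Sum.inl i) (Sum.inl j) = 0 := rfl
@[simp] lemma Gt_lr (m : Pt2 n) (i j : Fin (n+1)) :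
    Gt n m (Sum.inl i) (Sum.inr j) = if i = j then 1 else 0 := rfl
@[simp] lemma Gt_rl (m : Pt2 n) (i j : Fin (n+1)) :
    Gt n m (Sum.inr i) (Sum.inl j) = if i = j then 1 else 0 := rfl
@[simp] lemma Gt_rr (m : Pt2 n) (i j : Fin (n+1)) :
    Gt n m (Sum.inr i) (Sum.inr j) = m (Sum.inl i) * m (Sum.inl j) := rfl

lemma diff_coord (b : Idx2 n) : Differentiable ℝ (fun m' : Pt2 n => m' b) :=
  (ContinuousLinearMap.proj b : Pt2 n →L[ℝ] ℝ).differentiable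

lemma pd_coord_mul_coord (b c : Idx2 n) (m : Pt2 n) (a : Idx2 n) :
    pd (fun m' => m' b * m' c) m a
      = (if b = a then 1 else 0) * m c + m b * (if c = a then 1 else 0) := by
  rw [pd_mul ((diff_coord b) m) ((diff_coord c) m), pd_coord, pd_coord]

variable {V : Pt2 n → Pt2 n}

lemma lie_pp (V : Pt2 n → Pt2 n) (m : Pt2 n) (i j : Fin (n+1)) :
    lieDerivGt n V m (Sum.inl i) (Sum.inl j)
      = pd (fun m' => V m' (Sum.inr j)) m (Sum.inl i)
        + pd (fun m' => V m' (Sum.inr i)) m (Sum.inl j) := by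
  rw [lieDerivGt, Fintype.sum_sum_type]
  simp [pd_const, Finset.sum_add_distrib, ite_mul, Finset.sum_ite_eq, Finset.sum_ite_eq']

lemma lie_px (V : Pt2 n → Pt2 n) (m : Pt2 n) (i j : Fin (n+1)) :
    lieDerivGt n V m (Sum.inl i) (Sum.inr j)
      = pd (fun m' => V m' (Sum.inl j)) m (Sum.inl i)
        + m (Sum.inl j) * ∑ k, m (Sum.inl k) * pd (fun m' => V m' (Sum.inr k)) m (Sum.inl i)
        + pd (fun m' => V m' (Sum.inr i)) m (Sum.inr j) := by
  rw [lieDerivGt, Fintype.sum_sum_type]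
  simp [pd_const, Finset.sum_add_distrib, ite_mul, Finset.sum_ite_eq, Finset.sum_ite_eq',
    Finset.mul_sum]
  try ring_nf
  try simp [mul_comm, mul_left_comm, mul_assoc]
  try abel

lemma lie_xp (V : Pt2 n → Pt2 n) (m : Pt2 n) (i j : Fin (n+1)) :
    lieDerivGt n V m (Sum.inr i) (Sum.inl j)
      = pd (fun m' => V m' (Sum.inl i)) m (Sum.inl j)
        + m (Sum.inl i) * ∑ k, m (Sum.inl k) * pd (fun m' => V m' (Sum.inr k)) m (Sum.inl j)
        + pd (fun m' => V m' (Sum.inr j)) m (Sum.inr i) := by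
  rw [lieDerivGt, Fintype.sum_sum_type]
  simp [pd_const, Finset.sum_add_distrib, ite_mul, Finset.sum_ite_eq, Finset.sum_ite_eq',
    Finset.mul_sum]
  try ring_nf
  try simp [mul_comm, mul_left_comm, mul_assoc]
  try abel

lemma lie_xx (V : Pt2 n → Pt2 n) (m : Pt2 n) (i j : Fin (n+1)) :
    lieDerivGt n V m (Sum.inr i) (Sum.inr j)
      = m (Sum.inl j) * V m (Sum.inl i) + m (Sum.inl i) * V m (Sum.inl j)
        + pd (fun m' => V m' (Sum.inl j)) m (Sum.inr i)
        + m (Sum.inl j) * ∑ k, m (Sum.inl k) * pd (fun m' => V m' (Sum.inr k)) m (Sum.inr i)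
        + pd (fun m' => V m' (Sum.inl i)) m (Sum.inr j)
        + m (Sum.inl i) * ∑ k, m (Sum.inl k) * pd (fun m' => V m' (Sum.inr k)) m (Sum.inr j) := by
  rw [lieDerivGt, Fintype.sum_sum_type]
  simp [pd_coord_mul_coord, pd_const, Finset.sum_add_distrib, ite_mul, mul_ite,
    Finset.sum_ite_eq, Finset.sum_ite_eq', Finset.mul_sum, mul_add]
  try ring_nf
  try simp [mul_comm, mul_left_comm, mul_assoc]
  try abel


variable {n : ℕ}

noncomputable def KF (n : ℕ) (ν : Fin (n+1) → ℝ) (η : Fin (n+1) → Fin (n+1) → ℝ)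
    (k : Fin (n+1) → ℝ) : Pt2 n → Pt2 n := fun m =>
  (∑ s, ν s • XsVF n s m) + (∑ i, ∑ j, η i j • QijVF n i j m) + ∑ i, k i • DiVF n i m

section KFcomp
variable {n : ℕ} (ν : Fin (n+1) → ℝ) (η : Fin (n+1) → Fin (n+1) → ℝ)
    (k : Fin (n+1) → ℝ) (m : Pt2 n)

lemma KF_inl (l : Fin (n+1)) : KF n ν η k m (Sum.inl l) =
    -(∑ j, η l j * m (Sum.inl j))
      - m (Sum.inl l) * (∑ i, k i * m (Sum.inr i)) / 2
      + k l - k l * (∑ i, m (Sum.inr i) * m (Sum.inl i)) / 2 := by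
  simp [KF, XsVF, QijVF, DiVF, QVF, Pi.single_apply, Finset.sum_sub_distrib,
    Finset.sum_ite_eq, Finset.sum_ite_eq', mul_ite, ite_mul, mul_add, sub_mul, add_mul,
    Finset.sum_add_distrib, Finset.mul_sum, Finset.sum_div]
  have e1 : ∀ x, k x * (m (Sum.inr x) / 2 * m (Sum.inl l))
      = m (Sum.inl l) * (k x * m (Sum.inr x)) / 2 := fun x => by ring
  rw [mul_sub, mul_one, Finset.mul_sum]
  simp only [e1]
  rw [Finset.sum_congr rfl fun x _ => show k l * (2⁻¹ * (m (Sum.inr x) * m (Sum.inl x)))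
      = k l * (m (Sum.inr x) * m (Sum.inl x)) / 2 from by ring]
  ring

lemma KF_inr (l : Fin (n+1)) : KF n ν η k m (Sum.inr l) =
    ν l + (∑ i, η i l * m (Sum.inr i))
      + (∑ i, k i * m (Sum.inr i)) * m (Sum.inr l) / 2 := by
  simp [KF, XsVF, QijVF, DiVF, QVF, Pi.single_apply, Finset.sum_sub_distrib,
    Finset.sum_ite_eq, Finset.sum_ite_eq', mul_ite, ite_mul, mul_add, sub_mul, add_mul,
    Finset.sum_add_distrib, Finset.mul_sum, Finset.sum_div]
  simp [mul_sub, Finset.mul_sum, Finset.sum_mul, div_eq_mul_inv,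
    mul_comm, mul_left_comm, mul_assoc]

lemma pd_KF_inl_inl (l i : Fin (n+1)) : pd (fun m' => KF n ν η k m' (Sum.inl l)) m (Sum.inl i) =
    -η l i - (if l = i then 1 else 0) * (∑ t, k t * m (Sum.inr t)) / 2
      - k l * m (Sum.inr i) / 2 := by
  rw [show (fun m' => KF n ν η k m' (Sum.inl l)) = fun m' =>
      -(∑ j, η l j * m' (Sum.inl j)) - m' (Sum.inl l) * (∑ t, k t * m' (Sum.inr t)) / 2
        + k l - k l * (∑ t, m' (Sum.inr t) * m' (Sum.inl t)) / 2
    from funext fun m' => KF_inl ν η k m' l]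
  simp (disch := fun_prop) only [pd_sub, pd_add, pd_neg, pd_mul, pd_sum, pd_coord, pd_const,
    pd_div_const, pd_const_mul]
  simp [Finset.sum_ite_eq, Finset.sum_ite_eq', mul_ite, ite_mul]
  try ring

lemma pd_KF_inl_inr (l i : Fin (n+1)) : pd (fun m' => KF n ν η k m' (Sum.inl l)) m (Sum.inr i) =
    -(m (Sum.inl l) * k i) / 2 - k l * m (Sum.inl i) / 2 := by
  rw [show (fun m' => KF n ν η k m' (Sum.inl l)) = fun m' =>
      -(∑ j, η l j * m' (Sum.inl j)) - m' (Sum.inl l) * (∑ t, k t * m' (Sum.inr t)) / 2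
        + k l - k l * (∑ t, m' (Sum.inr t) * m' (Sum.inl t)) / 2
    from funext fun m' => KF_inl ν η k m' l]
  simp (disch := fun_prop) only [pd_sub, pd_add, pd_neg, pd_mul, pd_sum, pd_coord, pd_const,
    pd_div_const, pd_const_mul]
  simp [Finset.sum_ite_eq, Finset.sum_ite_eq', mul_ite, ite_mul]
  try ring

lemma pd_KF_inr_inl (l i : Fin (n+1)) :
    pd (fun m' => KF n ν η k m' (Sum.inr l)) m (Sum.inl i) = 0 := by
  rw [show (fun m' => KF n ν η k m' (Sum.inr l)) = fun m' =>
      ν l + (∑ t, η t l * m' (Sum.inr t)) + (∑ t, k t * m' (Sum.inr t)) * m' (Sum.inr l) / 2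
    from funext fun m' => KF_inr ν η k m' l]
  simp (disch := fun_prop) only [pd_sub, pd_add, pd_neg, pd_mul, pd_sum, pd_coord, pd_const,
    pd_div_const, pd_const_mul]
  simp

lemma pd_KF_inr_inr (l i : Fin (n+1)) : pd (fun m' => KF n ν η k m' (Sum.inr l)) m (Sum.inr i) =
    η i l + k i * m (Sum.inr l) / 2
      + (if l = i then 1 else 0) * (∑ t, k t * m (Sum.inr t)) / 2 := by
  rw [show (fun m' => KF n ν η k m' (Sum.inr l)) = fun m' =>
      ν l + (∑ t, η t l * m' (Sum.inr t)) + (∑ t, k t * m' (Sum.inr t)) * m' (Sum.inr l) / 2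
    from funext fun m' => KF_inr ν η k m' l]
  simp (disch := fun_prop) only [pd_sub, pd_add, pd_neg, pd_mul, pd_sum, pd_coord, pd_const,
    pd_div_const, pd_const_mul]
  simp [Finset.sum_ite_eq, Finset.sum_ite_eq', mul_ite, ite_mul]
  try ring

lemma lie_KF_zero (ν : Fin (n+1) → ℝ) (η : Fin (n+1) → Fin (n+1) → ℝ) (k : Fin (n+1) → ℝ)
    (m : Pt2 n) (α β : Idx2 n) : lieDerivGt n (KF n ν η k) m α β = 0 := by
  obtain i|i := α <;> obtain j|j := β
  · rw [lie_pp]; simp [pd_KF_inr_inl]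
  · rw [lie_px]
    simp only [pd_KF_inl_inl, pd_KF_inr_inl, pd_KF_inr_inr]
    rcases eq_or_ne i j with h | h
    · subst h; simp; try ring
    · simp [h, h.symm]; try ring
  · rw [lie_xp]
    simp only [pd_KF_inl_inl, pd_KF_inr_inl, pd_KF_inr_inr]
    rcases eq_or_ne i j with h | h
    · subst h; simp; try ring
    · simp [h, h.symm]; try ring
  · rw [lie_xx]
    simp only [pd_KF_inl_inr, pd_KF_inr_inr]
    simp only [KF_inl]
    have hsum : ∀ i : Fin (n+1),
        (∑ t, m (Sum.inl t) * (η i t + k i * m (Sum.inr t) / 2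
          + (if t = i then 1 else 0) * (∑ t, k t * m (Sum.inr t)) / 2))
        = (∑ t, η i t * m (Sum.inl t))
          + k i * (∑ t, m (Sum.inr t) * m (Sum.inl t)) / 2
          + m (Sum.inl i) * (∑ t, k t * m (Sum.inr t)) / 2 := by
      intro i
      rw [Finset.sum_congr rfl fun t _ => show
        m (Sum.inl t) * (η i t + k i * m (Sum.inr t) / 2
          + (if t = i then 1 else 0) * (∑ t, k t * m (Sum.inr t)) / 2)
        = η i t * m (Sum.inl t) + k i * (m (Sum.inr t) * m (Sum.inl t)) / 2
          + (if t = i then m (Sum.inl t) * (∑ t, k t * m (Sum.inr t)) / 2 else 0) from by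
        by_cases h : t = i <;> simp [h] <;> ring]
      simp [Finset.sum_add_distrib, Finset.sum_ite_eq, Finset.sum_ite_eq']
      rw [Finset.sum_congr rfl fun t _ => show
          k i * (m (Sum.inr t) * m (Sum.inl t)) / 2
            = k i * ((m (Sum.inr t) * m (Sum.inl t)) / 2) from by ring,
        ← Finset.mul_sum, ← Finset.sum_div]
      ring
    rw [hsum, hsum]
    ring

end KFcomp


/-! ### Forward direction -/

section Forward

variable (V : Pt2 n → Pt2 n)

def Ac (i : Fin (n+1)) : Pt2 n → ℝ := fun m => V m (Sum.inl i)
def Bc (i : Fin (n+1)) : Pt2 n → ℝ := fun m => V m (Sum.inr i)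
noncomputable def wc (i k : Fin (n+1)) : Pt2 n → ℝ := fun m => pd (Bc V k) m (Sum.inl i)
noncomputable def bt (j k : Fin (n+1)) : Pt2 n → ℝ := fun m => pd (Bc V k) m (Sum.inr j)
noncomputable def ac (i : Fin (n+1)) : Pt2 n → ℝ :=
  fun m => Ac V i m + ∑ t, m (Sum.inl t) * bt V i t m

variable {V}

lemma ccoord (a : Idx2 n) : ContDiff ℝ (⊤ : ℕ∞) (fun m : Pt2 n => m a) :=
  contDiff_pi.mp contDiff_id a

/-- pd of a sum of coordinate-times-function terms. -/
lemma pd_csum {g : Fin (n+1) → Pt2 n → ℝ} (hg : ∀ t, ContDiff ℝ (⊤ : ℕ∞) (g t))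
    (c : Fin (n+1) → Idx2 n) (m : Pt2 n) (a : Idx2 n) :
    pd (fun m' => ∑ t, m' (c t) * g t m') m a
      = ∑ t, ((if c t = a then 1 else 0) * g t m + m (c t) * pd (g t) m a) := by
  rw [pd_sum (f := fun t m' => m' (c t) * g t m') Finset.univ fun t _ =>
    (((ccoord (c t)).differentiable (by simp) m).mul ((hg t).differentiable (by simp) m))]
  exact Finset.sum_congr rfl fun t _ => by
    rw [pd_mul ((ccoord (c t)).differentiable (by simp) m) ((hg t).differentiable (by simp) m),
      pd_coord]

lemma pd_coord_mul {F : Pt2 n → ℝ} (hF : DifferentiableAt ℝ F m) (c : Idx2 n) (a : Idx2 n) :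
    pd (fun m' => m' c * F m') m a = (if c = a then 1 else 0) * F m + m c * pd F m a := by
  rw [pd_mul ((ccoord c).differentiable (by simp) m) hF, pd_coord]

lemma pd_zero_fun {f : Pt2 n → ℝ} (h : ∀ m', f m' = 0) (m : Pt2 n) (a : Idx2 n) :
    pd f m a = 0 := by
  have : f = fun _ => (0:ℝ) := funext h
  rw [this]; exact pd_const 0 m a


variable (hV : ContDiff ℝ (⊤ : ℕ∞) V)
include hV

lemma cAc (i : Fin (n+1)) : ContDiff ℝ (⊤ : ℕ∞) (Ac V i) := contDiff_pi.mp hV (Sum.inl i)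
lemma cBc (i : Fin (n+1)) : ContDiff ℝ (⊤ : ℕ∞) (Bc V i) := contDiff_pi.mp hV (Sum.inr i)
lemma cwc (i k : Fin (n+1)) : ContDiff ℝ (⊤ : ℕ∞) (wc V i k) := contDiff_pd (cBc hV k) _
lemma cbt (j k : Fin (n+1)) : ContDiff ℝ (⊤ : ℕ∞) (bt V j k) := contDiff_pd (cBc hV k) _
lemma cac (i : Fin (n+1)) : ContDiff ℝ (⊤ : ℕ∞) (ac V i) :=
  (cAc hV i).add (ContDiff.sum fun t _ => (ccoord _).mul (cbt hV i t))

variable (hK : ∀ m α β, lieDerivGt n V m α β = 0)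
include hK

lemma E1 (m : Pt2 n) (i j : Fin (n+1)) : wc V i j m + wc V j i m = 0 := by
  have := hK m (Sum.inl i) (Sum.inl j); rw [lie_pp] at this; exact this

lemma E2 (m : Pt2 n) (i j : Fin (n+1)) :
    pd (Ac V j) m (Sum.inl i) + m (Sum.inl j) * (∑ t, m (Sum.inl t) * wc V i t m)
      + bt V j i m = 0 := by
  have := hK m (Sum.inl i) (Sum.inr j); rw [lie_px] at this
  exact this

lemma E3 (m : Pt2 n) (i j : Fin (n+1)) :
    m (Sum.inl j) * Ac V i m + m (Sum.inl i) * Ac V j m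
      + pd (Ac V j) m (Sum.inr i) + m (Sum.inl j) * (∑ t, m (Sum.inl t) * bt V i t m)
      + pd (Ac V i) m (Sum.inr j) + m (Sum.inl i) * (∑ t, m (Sum.inl t) * bt V j t m) = 0 := by
  have := hK m (Sum.inr i) (Sum.inr j); rw [lie_xx] at this
  exact this

/-- `w` is antisymmetric, as functions. -/
lemma wc_antisym (i j : Fin (n+1)) : wc V i j = fun m => -(wc V j i m) :=
  funext fun m => by have := E1 hV hK m i j; linarith

/-- Phase 1: second `p`-derivatives of `B` vanish. -/
lemma wc_pd_inl (m : Pt2 n) (l i k : Fin (n+1)) : pd (wc V i k) m (Sum.inl l) = 0 := by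
  have sym : ∀ l i k : Fin (n+1),
      pd (wc V i k) m (Sum.inl l) = pd (wc V l k) m (Sum.inl i) := fun l i k =>
    clairaut (cBc hV k) m (Sum.inl i) (Sum.inl l)
  have asy : ∀ l i k : Fin (n+1),
      pd (wc V i k) m (Sum.inl l) = -pd (wc V k i) m (Sum.inl l) := by
    intro l i k
    have h0 : pd (fun m' => wc V i k m' + wc V k i m') m (Sum.inl l) = 0 :=
      pd_zero_fun (fun m' => E1 hV hK m' i k) m (Sum.inl l)
    rw [pd_add (((cwc hV i k).differentiable (by simp)) m) (((cwc hV k i).differentiable (by simp)) m)]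
      at h0
    linarith
  have h1 := sym l i k
  have h2 := asy i l k
  have h3 := sym i k l
  have h4 := asy k i l
  have h5 := sym k l i
  have h6 := asy l k i
  linarith [sym l i k, asy i l k, sym i k l, asy k i l, sym k l i, asy l k i]

/-- Phase 2/3: all first `p`-derivatives of `B` vanish. -/
lemma wc_eq_zero (m : Pt2 n) (l i : Fin (n+1)) : wc V l i m = 0 := by
  -- the identity (∗)
  have star : ∀ (m : Pt2 n) (l i j : Fin (n+1)),
      2 * pd (wc V l i) m (Sum.inr j)
        + (if l = j then 1 else 0) * (∑ t, m (Sum.inl t) * wc V i t m)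
        - (if i = j then 1 else 0) * (∑ t, m (Sum.inl t) * wc V l t m)
        - 2 * m (Sum.inl j) * wc V l i m = 0 := by
    intro m l i j
    have key : ∀ l i : Fin (n+1),
        pd (fun m' => pd (Ac V j) m' (Sum.inl i)) m (Sum.inl l)
          + ((if (Sum.inl j : Idx2 n) = Sum.inl l then 1 else 0)
                * (∑ t, m (Sum.inl t) * wc V i t m)
              + m (Sum.inl j) * wc V i l m)
          + pd (wc V l i) m (Sum.inr j) = 0 := by
      intro l i
      have h0 : pd (fun m' => pd (Ac V j) m' (Sum.inl i)
          + m' (Sum.inl j) * (∑ t, m' (Sum.inl t) * wc V i t m') + bt V j i m') m (Sum.inl l)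
          = 0 := pd_zero_fun (fun m' => E2 hV hK m' i j) m (Sum.inl l)
      have d1 : DifferentiableAt ℝ (fun m' => pd (Ac V j) m' (Sum.inl i)) m :=
        ((contDiff_pd (cAc hV j) (Sum.inl i)).differentiable (by simp)) m
      have d2 : DifferentiableAt ℝ
          (fun m' => m' (Sum.inl j) * (∑ t, m' (Sum.inl t) * wc V i t m')) m := by
        apply DifferentiableAt.mul (((ccoord _).differentiable (by simp)) m)
        exact (((ContDiff.sum fun t _ => (ccoord _).mul (cwc hV i t)).differentiable (by simp)) m)
      have d3 : DifferentiableAt ℝ (bt V j i) m := ((cbt hV j i).differentiable (by simp)) m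
      rw [pd_add (f := fun m' => pd (Ac V j) m' (Sum.inl i)
          + m' (Sum.inl j) * (∑ t, m' (Sum.inl t) * wc V i t m')) (d1.add d2) d3, pd_add d1 d2,
        pd_coord_mul (F := fun m' => ∑ t, m' (Sum.inl t) * wc V i t m') ((((ContDiff.sum fun t _ => (ccoord _).mul (cwc hV i t))).differentiable
          (by simp)) m),
        pd_csum (fun t => cwc hV i t)] at h0
      simp only [wc_pd_inl hV hK, mul_zero, add_zero] at h0
      -- collapse the delta sum
      have hcol : (∑ t, (if (Sum.inl t : Idx2 n) = Sum.inl l then 1 else 0) * wc V i t m)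
          = wc V i l m := by
        simp [Sum.inl.injEq, ite_mul, Finset.sum_ite_eq, Finset.sum_ite_eq']
      rw [hcol] at h0
      have hbt : pd (bt V j i) m (Sum.inl l) = pd (wc V l i) m (Sum.inr j) :=
        clairaut (cBc hV i) m (Sum.inr j) (Sum.inl l)
      rw [hbt] at h0
      exact h0
    have k1 := key l i
    have k2 := key i l
    -- symmetry of second derivatives of Ac
    have hsym : pd (fun m' => pd (Ac V j) m' (Sum.inl i)) m (Sum.inl l)
        = pd (fun m' => pd (Ac V j) m' (Sum.inl l)) m (Sum.inl i) :=
      clairaut (cAc hV j) m (Sum.inl i) (Sum.inl l)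
    -- antisymmetry of wc as functions
    have hneg : ∀ (a : Idx2 n), pd (wc V i l) m a = -pd (wc V l i) m a := by
      intro a
      rw [wc_antisym hV hK i l, pd_neg]
    have e1 : wc V i l m = -wc V l i m := by have := E1 hV hK m i l; linarith
    have hj : ((if (Sum.inl j : Idx2 n) = Sum.inl l then 1 else 0) : ℝ)
        = if l = j then 1 else 0 := by simp [Sum.inl.injEq, eq_comm]
    have hj' : ((if (Sum.inl j : Idx2 n) = Sum.inl i then 1 else 0) : ℝ)
        = if i = j then 1 else 0 := by simp [Sum.inl.injEq, eq_comm]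
    rw [hj] at k1
    rw [hj', ← hsym] at k2
    have := hneg (Sum.inr j)
    have e2 : m (Sum.inl j) * wc V i l m = -(m (Sum.inl j) * wc V l i m) := by
      rw [e1]; ring
    linarith
  -- w and its x-derivatives are constant along p-lines
  have hwconst : ∀ (q : Fin (n+1) → ℝ) (l i : Fin (n+1)),
      wc V l i (updP m q) = wc V l i m := fun q l i =>
    pconst_eval ((cwc hV l i).differentiable (by simp))
      (fun m' s => wc_pd_inl hV hK m' s l i) m q
  have hGconst : ∀ (q : Fin (n+1) → ℝ) (l i j : Fin (n+1)),
      pd (wc V l i) (updP m q) (Sum.inr j) = pd (wc V l i) m (Sum.inr j) := by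
    intro q l i j
    apply pconst_eval ((contDiff_pd (cwc hV l i) (Sum.inr j)).differentiable (by simp))
      (fun m' s => ?_) m q
    have : pd (fun m'' => pd (wc V l i) m'' (Sum.inl s)) m' (Sum.inr j) = 0 :=
      pd_zero_fun (fun m'' => wc_pd_inl hV hK m'' s l i) m' (Sum.inr j)
    rw [← clairaut (cwc hV l i) m' (Sum.inr j) (Sum.inl s)] at this
    exact this
  -- evaluate (∗) with arbitrary p-part
  have star' : ∀ (q : Fin (n+1) → ℝ) (l i j : Fin (n+1)),
      2 * pd (wc V l i) m (Sum.inr j)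
        + (if l = j then 1 else 0) * (∑ t, q t * wc V i t m)
        - (if i = j then 1 else 0) * (∑ t, q t * wc V l t m)
        - 2 * q j * wc V l i m = 0 := by
    intro q l i j
    have := star (updP m q) l i j
    simp only [hwconst q, hGconst q, updP_inl] at this
    exact this
  have hG0 : ∀ l i j : Fin (n+1), pd (wc V l i) m (Sum.inr j) = 0 := by
    intro l i j
    have := star' 0 l i j
    simpa using this
  have := star' (Pi.single l 1) l i l
  rw [hG0 l i l] at this
  simp [Pi.single_apply, ite_mul, Finset.sum_ite_eq, Finset.sum_ite_eq'] at this
  -- this : (if l = l ...) * wc V i l m - (if i = l ...) * wc V l l m - 2 * wc V l i m = 0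
  have hll : wc V l l m = 0 := by have := E1 hV hK m l l; linarith
  have hil : wc V i l m = -wc V l i m := by have := E1 hV hK m i l; linarith
  rcases eq_or_ne i l with h | h
  · subst h; exact hll
  · simp only [if_pos rfl, if_neg h, one_mul, zero_mul, Pi.single_eq_same] at this
    linarith

/-- `∂_{p_i} A_j = -∂_{x^j} B^i`. -/
lemma pdA_inl (m : Pt2 n) (i j : Fin (n+1)) :
    pd (Ac V j) m (Sum.inl i) = -(bt V j i m) := by
  have := E2 hV hK m i j
  simp only [wc_eq_zero hV hK, mul_zero, Finset.sum_const_zero] at this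
  linarith

lemma pd_bt_inl (m : Pt2 n) (l j k : Fin (n+1)) : pd (bt V j k) m (Sum.inl l) = 0 := by
  have h : pd (bt V j k) m (Sum.inl l) = pd (wc V l k) m (Sum.inr j) :=
    clairaut (cBc hV k) m (Sum.inr j) (Sum.inl l)
  rw [h]
  exact pd_zero_fun (fun m' => wc_eq_zero hV hK m' l k) m (Sum.inr j)

lemma pd_ac_inl (m : Pt2 n) (i l : Fin (n+1)) : pd (ac V i) m (Sum.inl l) = 0 := by
  show pd (fun m => Ac V i m + ∑ t, m (Sum.inl t) * bt V i t m) m (Sum.inl l) = 0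
  rw [pd_add (((cAc hV i).differentiable (by simp)) m)
    (((ContDiff.sum fun t _ => (ccoord _).mul (cbt hV i t)).differentiable (by simp)) m),
    pd_csum (fun t => cbt hV i t)]
  simp only [pd_bt_inl hV hK, mul_zero, add_zero, pdA_inl hV hK]
  simp [Sum.inl.injEq, ite_mul, Finset.sum_ite_eq, Finset.sum_ite_eq']

lemma pd_ac_inr (m : Pt2 n) (i j : Fin (n+1)) :
    pd (ac V i) m (Sum.inr j) = pd (Ac V i) m (Sum.inr j)
      + ∑ t, m (Sum.inl t) * pd (bt V i t) m (Sum.inr j) := by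
  show pd (fun m => Ac V i m + ∑ t, m (Sum.inl t) * bt V i t m) m (Sum.inr j) = _
  rw [pd_add (((cAc hV i).differentiable (by simp)) m)
    (((ContDiff.sum fun t _ => (ccoord _).mul (cbt hV i t)).differentiable (by simp)) m),
    pd_csum (fun t => cbt hV i t)]
  simp

/-- The reduced third Killing equation. -/
lemma E3' (m : Pt2 n) (i j : Fin (n+1)) :
    m (Sum.inl j) * ac V i m + m (Sum.inl i) * ac V j m
      + pd (ac V j) m (Sum.inr i) + pd (ac V i) m (Sum.inr j)
      - (∑ t, m (Sum.inl t) * pd (bt V j t) m (Sum.inr i))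
      - (∑ t, m (Sum.inl t) * pd (bt V i t) m (Sum.inr j)) = 0 := by
  have e3 := E3 hV hK m i j
  have hac : ∀ i', Ac V i' m = ac V i' m - ∑ t, m (Sum.inl t) * bt V i' t m := by
    intro i'; show Ac V i' m = (Ac V i' m + _) - _; ring
  rw [hac i, hac j] at e3
  rw [pd_ac_inr hV hK m i j, pd_ac_inr hV hK m j i]
  linarith [e3]

lemma pconst_pd_bt (m : Pt2 n) (q : Fin (n+1) → ℝ) (j t i : Fin (n+1)) :
    pd (bt V j t) (updP m q) (Sum.inr i) = pd (bt V j t) m (Sum.inr i) := by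
  apply pconst_eval ((contDiff_pd (cbt hV j t) (Sum.inr i)).differentiable (by simp))
    (fun m' s => ?_) m q
  have h : pd (fun m'' => pd (bt V j t) m'' (Sum.inl s)) m' (Sum.inr i) = 0 :=
    pd_zero_fun (fun m'' => pd_bt_inl hV hK m'' s j t) m' (Sum.inr i)
  rw [← clairaut (cbt hV j t) m' (Sum.inr i) (Sum.inl s)] at h
  exact h

lemma pconst_ac (m : Pt2 n) (q : Fin (n+1) → ℝ) (i : Fin (n+1)) :
    ac V i (updP m q) = ac V i m :=
  pconst_eval ((cac hV i).differentiable (by simp))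
    (fun m' s => pd_ac_inl hV hK m' i s) m q

lemma pconst_pd_ac (m : Pt2 n) (q : Fin (n+1) → ℝ) (i j : Fin (n+1)) :
    pd (ac V i) (updP m q) (Sum.inr j) = pd (ac V i) m (Sum.inr j) := by
  apply pconst_eval ((contDiff_pd (cac hV i) (Sum.inr j)).differentiable (by simp))
    (fun m' s => ?_) m q
  have h : pd (fun m'' => pd (ac V i) m'' (Sum.inl s)) m' (Sum.inr j) = 0 :=
    pd_zero_fun (fun m'' => pd_ac_inl hV hK m'' i s) m' (Sum.inr j)
  rw [← clairaut (cac hV i) m' (Sum.inr j) (Sum.inl s)] at h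
  exact h

lemma E3q (m : Pt2 n) (q : Fin (n+1) → ℝ) (i j : Fin (n+1)) :
    q j * ac V i m + q i * ac V j m
      + pd (ac V j) m (Sum.inr i) + pd (ac V i) m (Sum.inr j)
      - (∑ t, q t * pd (bt V j t) m (Sum.inr i))
      - (∑ t, q t * pd (bt V i t) m (Sum.inr j)) = 0 := by
  have := E3' hV hK (updP m q) i j
  simp only [pconst_ac hV hK m q, pconst_pd_ac hV hK m q, pconst_pd_bt hV hK m q,
    updP_inl] at this
  exact this

/-- The flat-Killing equation for `a`. -/
lemma pd_ac_sym (m : Pt2 n) (i j : Fin (n+1)) :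
    pd (ac V j) m (Sum.inr i) + pd (ac V i) m (Sum.inr j) = 0 := by
  have := E3q hV hK m 0 i j
  simpa using this

/-- Second `x`-derivatives of `B` in terms of `a`. -/
lemma bt_deriv (m : Pt2 n) (i j s : Fin (n+1)) :
    2 * pd (bt V j s) m (Sum.inr i)
      = (if j = s then 1 else 0) * ac V i m + (if i = s then 1 else 0) * ac V j m := by
  have h := E3q hV hK m (Pi.single s 1) i j
  have hsym : pd (bt V i s) m (Sum.inr j) = pd (bt V j s) m (Sum.inr i) :=
    clairaut (cBc hV s) m (Sum.inr i) (Sum.inr j)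
  have h3a := pd_ac_sym hV hK m i j
  simp only [Pi.single_apply, ite_mul, one_mul, zero_mul, Finset.sum_ite_eq,
    Finset.sum_ite_eq', Finset.mem_univ, if_true] at h
  rw [hsym] at h
  simp only [ite_mul, one_mul, zero_mul]
  linarith

/-- All `x`-derivatives of `a` vanish. -/
lemma pd_ac_inr_zero (m : Pt2 n) (i j : Fin (n+1)) :
    pd (ac V i) m (Sum.inr j) = 0 := by
  have key : ∀ i l s j' : Fin (n+1),
      (if j' = s then 1 else 0) * pd (ac V i) m (Sum.inr l)
        + (if i = s then 1 else 0) * pd (ac V j') m (Sum.inr l)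
      = (if j' = s then 1 else 0) * pd (ac V l) m (Sum.inr i)
        + (if l = s then 1 else 0) * pd (ac V j') m (Sum.inr i) := by
    intro i l s j'
    have expand : ∀ i l : Fin (n+1),
        pd (fun m' => 2 * pd (bt V j' s) m' (Sum.inr i)) m (Sum.inr l)
        = (if j' = s then 1 else 0) * pd (ac V i) m (Sum.inr l)
          + (if i = s then 1 else 0) * pd (ac V j') m (Sum.inr l) := by
      intro i l
      have hfe : (fun m' => 2 * pd (bt V j' s) m' (Sum.inr i))
          = fun m' => (if j' = s then 1 else 0) * ac V i m'
              + (if i = s then 1 else 0) * ac V j' m' :=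
        funext fun m' => bt_deriv hV hK m' i j' s
      rw [hfe, pd_add (f := fun m' => (if j' = s then 1 else 0) * ac V i m')
          (g := fun m' => (if i = s then 1 else 0) * ac V j' m') ((differentiableAt_const _).mul (((cac hV i).differentiable (by simp)) m))
        ((differentiableAt_const _).mul (((cac hV j').differentiable (by simp)) m)),
        pd_const_mul (((cac hV i).differentiable (by simp)) m),
        pd_const_mul (((cac hV j').differentiable (by simp)) m)]
    have hcl : pd (fun m' => 2 * pd (bt V j' s) m' (Sum.inr i)) m (Sum.inr l)
        = pd (fun m' => 2 * pd (bt V j' s) m' (Sum.inr l)) m (Sum.inr i) := by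
      rw [pd_const_mul (((contDiff_pd (cbt hV j' s) (Sum.inr i)).differentiable (by simp)) m),
        pd_const_mul (((contDiff_pd (cbt hV j' s) (Sum.inr l)).differentiable (by simp)) m),
        clairaut (cbt hV j' s) m (Sum.inr i) (Sum.inr l)]
    rw [← expand i l, hcl, expand l i]
  have hjj : pd (ac V j) m (Sum.inr j) = 0 := by
    have := pd_ac_sym hV hK m j j; linarith
  rcases eq_or_ne i j with h | h
  · subst h; exact hjj
  · have k1 := key i j j j
    rw [if_pos rfl, if_neg h] at k1
    simp only [one_mul, zero_mul, add_zero] at k1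
    have hs := pd_ac_sym hV hK m j i
    -- k1 : pd (ac V i) m (inr j) = pd (ac V j) m (inr i) + pd (ac V j) m (inr i)? check
    linarith

lemma ac_const (m : Pt2 n) (i : Fin (n+1)) : ac V i m = ac V i 0 := by
  apply const_of_pd_zero ((cac hV i).differentiable (by simp)) (fun m' a => ?_) m 0
  rcases a with l | l
  · exact pd_ac_inl hV hK m' i l
  · exact pd_ac_inr_zero hV hK m' i l

lemma bt_formula (m : Pt2 n) (j s : Fin (n+1)) :
    bt V j s m = bt V j s 0 + ac V j 0 * m (Sum.inr s) / 2
      + (if j = s then 1 else 0) * (∑ t, ac V t 0 * m (Sum.inr t)) / 2 := by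
  have cexp : Differentiable ℝ (fun m' : Pt2 n => ac V j 0 * m' (Sum.inr s) / 2
      + (if j = s then 1 else 0) * (∑ t, ac V t 0 * m' (Sum.inr t)) / 2) := by fun_prop
  have hdg : Differentiable ℝ (fun m' => bt V j s m' - (ac V j 0 * m' (Sum.inr s) / 2
      + (if j = s then 1 else 0) * (∑ t, ac V t 0 * m' (Sum.inr t)) / 2)) :=
    ((cbt hV j s).differentiable (by simp)).sub cexp
  have hpd : ∀ (m' : Pt2 n) (a : Idx2 n),
      pd (fun m'' => bt V j s m'' - (ac V j 0 * m'' (Sum.inr s) / 2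
        + (if j = s then 1 else 0) * (∑ t, ac V t 0 * m'' (Sum.inr t)) / 2)) m' a = 0 := by
    intro m' a
    rw [pd_sub (((cbt hV j s).differentiable (by simp)) m') (cexp m')]
    have hexp : pd (fun m'' : Pt2 n => ac V j 0 * m'' (Sum.inr s) / 2
        + (if j = s then 1 else 0) * (∑ t, ac V t 0 * m'' (Sum.inr t)) / 2) m' a
        = ac V j 0 * (if (Sum.inr s : Idx2 n) = a then 1 else 0) / 2
          + (if j = s then 1 else 0)
              * (∑ t, ac V t 0 * (if (Sum.inr t : Idx2 n) = a then 1 else 0)) / 2 := by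
      simp (disch := fun_prop) only [pd_add, pd_div_const, pd_const_mul, pd_sum, pd_coord]
    rw [hexp]
    rcases a with l | l
    · simp [pd_bt_inl hV hK]
    · have hd := bt_deriv hV hK m' l j s
      rw [ac_const hV hK m' l, ac_const hV hK m' j] at hd
      simp only [Sum.inr.injEq, mul_ite, ite_mul, one_mul, zero_mul, mul_one, mul_zero,
        Finset.sum_ite_eq, Finset.sum_ite_eq', Finset.mem_univ, if_true]
      rcases eq_or_ne j s with h1 | h1 <;> rcases eq_or_ne s l with h2 | h2 <;>
        rcases eq_or_ne l s with h3 | h3 <;>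
        first
        | (exfalso; exact h2 h3.symm)
        | (exfalso; exact h3 h2.symm)
        | (subst_vars; simp_all; try linarith)
        | (simp_all; try linarith)
  have key := const_of_pd_zero hdg hpd m 0
  have h0 : (∑ t, ac V t 0 * (0 : Pt2 n) (Sum.inr t)) = 0 := by simp
  simp only [h0] at key
  have hz : (0 : Pt2 n) (Sum.inr s) = 0 := rfl
  rw [hz] at key
  -- key : bt j s m - (...) = bt j s 0 - 0
  have : bt V j s m - (ac V j 0 * m (Sum.inr s) / 2
      + (if j = s then 1 else 0) * (∑ t, ac V t 0 * m (Sum.inr t)) / 2)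
      = bt V j s 0 - (ac V j 0 * 0 / 2 + (if j = s then 1 else 0) * 0 / 2) := key
  rcases eq_or_ne j s with h1 | h1 <;> simp [h1] at this ⊢ <;> linarith

lemma Bc_formula (m : Pt2 n) (s : Fin (n+1)) :
    Bc V s m = Bc V s 0 + (∑ t, bt V t s 0 * m (Sum.inr t))
      + (∑ t, ac V t 0 * m (Sum.inr t)) * m (Sum.inr s) / 2 := by
  have cexp : Differentiable ℝ (fun m' : Pt2 n => (∑ t, bt V t s 0 * m' (Sum.inr t))
      + (∑ t, ac V t 0 * m' (Sum.inr t)) * m' (Sum.inr s) / 2) := by fun_prop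
  have hdg : Differentiable ℝ (fun m' => Bc V s m' - ((∑ t, bt V t s 0 * m' (Sum.inr t))
      + (∑ t, ac V t 0 * m' (Sum.inr t)) * m' (Sum.inr s) / 2)) :=
    ((cBc hV s).differentiable (by simp)).sub cexp
  have hpd : ∀ (m' : Pt2 n) (a : Idx2 n),
      pd (fun m'' => Bc V s m'' - ((∑ t, bt V t s 0 * m'' (Sum.inr t))
        + (∑ t, ac V t 0 * m'' (Sum.inr t)) * m'' (Sum.inr s) / 2)) m' a = 0 := by
    intro m' a
    rw [pd_sub (((cBc hV s).differentiable (by simp)) m') (cexp m')]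
    have hexp : pd (fun m'' : Pt2 n => (∑ t, bt V t s 0 * m'' (Sum.inr t))
        + (∑ t, ac V t 0 * m'' (Sum.inr t)) * m'' (Sum.inr s) / 2) m' a
        = (∑ t, bt V t s 0 * (if (Sum.inr t : Idx2 n) = a then 1 else 0))
          + ((∑ t, ac V t 0 * (if (Sum.inr t : Idx2 n) = a then 1 else 0)) * m' (Sum.inr s)
            + (∑ t, ac V t 0 * m' (Sum.inr t)) * (if (Sum.inr s : Idx2 n) = a then 1 else 0))
              / 2 := by
      simp (disch := fun_prop) only [pd_add, pd_div_const, pd_const_mul, pd_sum, pd_coord,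
        pd_mul]
    rw [hexp]
    rcases a with l | l
    · have : pd (Bc V s) m' (Sum.inl l) = 0 := wc_eq_zero hV hK m' l s
      simp [this]
    · have hb : pd (Bc V s) m' (Sum.inr l) = bt V l s m' := rfl
      rw [hb, bt_formula hV hK m' l s]
      simp only [Sum.inr.injEq, mul_ite, ite_mul, one_mul, zero_mul, mul_one, mul_zero,
        Finset.sum_ite_eq, Finset.sum_ite_eq', Finset.mem_univ, if_true]
      rcases eq_or_ne l s with h1 | h1
      · subst h1; simp; try ring
      · simp [h1, Ne.symm h1]; try ring
  have key := const_of_pd_zero hdg hpd m 0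
  have h0 : ∀ c : Fin (n+1) → ℝ, (∑ t, c t * (0 : Pt2 n) (Sum.inr t)) = 0 := by
    intro c; simp [show ∀ t, (0 : Pt2 n) (Sum.inr t) = 0 from fun t => rfl]
  have : Bc V s m - ((∑ t, bt V t s 0 * m (Sum.inr t))
      + (∑ t, ac V t 0 * m (Sum.inr t)) * m (Sum.inr s) / 2)
      = Bc V s 0 - ((∑ t, bt V t s 0 * (0:Pt2 n) (Sum.inr t))
      + (∑ t, ac V t 0 * (0:Pt2 n) (Sum.inr t)) * (0:Pt2 n) (Sum.inr s) / 2) := key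
  rw [h0 (fun t => bt V t s 0), h0 (fun t => ac V t 0)] at this
  simp at this
  linarith

/-- Forward direction: a Killing field has the canonical form. -/
lemma forward_formula (m : Pt2 n) :
    V m = KF n (fun s => Bc V s 0) (fun i j => bt V i j 0) (fun i => ac V i 0) m := by
  funext a
  rcases a with i | s
  · rw [KF_inl]
    have h1 : V m (Sum.inl i) = ac V i m - ∑ t, m (Sum.inl t) * bt V i t m := by
      show V m (Sum.inl i) = (V m (Sum.inl i) + ∑ t, m (Sum.inl t) * bt V i t m)
        - ∑ t, m (Sum.inl t) * bt V i t m
      ring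
    rw [h1, ac_const hV hK m i,
      Finset.sum_congr rfl fun t _ => by rw [bt_formula hV hK m i t]]
    have hexpand : (∑ t, m (Sum.inl t) * (bt V i t 0 + ac V i 0 * m (Sum.inr t) / 2
        + (if i = t then 1 else 0) * (∑ t', ac V t' 0 * m (Sum.inr t')) / 2))
        = (∑ t, bt V i t 0 * m (Sum.inl t))
          + ac V i 0 * (∑ t, m (Sum.inr t) * m (Sum.inl t)) / 2
          + m (Sum.inl i) * (∑ t', ac V t' 0 * m (Sum.inr t')) / 2 := by
      rw [Finset.sum_congr rfl fun t _ => show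
          m (Sum.inl t) * (bt V i t 0 + ac V i 0 * m (Sum.inr t) / 2
            + (if i = t then 1 else 0) * (∑ t', ac V t' 0 * m (Sum.inr t')) / 2)
          = bt V i t 0 * m (Sum.inl t)
            + ac V i 0 * ((m (Sum.inr t) * m (Sum.inl t)) / 2)
            + (if i = t then m (Sum.inl t) * (∑ t', ac V t' 0 * m (Sum.inr t')) / 2 else 0)
          from by rcases eq_or_ne i t with h | h <;> simp [h] <;> ring]
      simp only [Finset.sum_add_distrib, Finset.sum_ite_eq, Finset.mem_univ, if_true]
      rw [← Finset.mul_sum, ← Finset.sum_div]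
      ring
    rw [hexpand]
    ring
  · rw [KF_inr]
    exact Bc_formula hV hK m s

end Forward

end KillingAux

open KillingAux in
theorem lifted_metric_killing_fields (n : ℕ) (hn : 1 ≤ n) (V : Pt2 n → Pt2 n)
    (hV : ContDiff ℝ (⊤ : ℕ∞) V) :
    (∀ m α β, lieDerivGt n V m α β = 0) ↔
      ∃ (ν : Fin (n + 1) → ℝ) (η : Fin (n + 1) → Fin (n + 1) → ℝ)
        (k : Fin (n + 1) → ℝ),
        ∀ m, V m = (∑ s, ν s • XsVF n s m) + (∑ i, ∑ j, η i j • QijVF n i j m)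
          + ∑ i, k i • DiVF n i m := by
  constructor
  · intro hK
    refine ⟨fun s => KillingAux.Bc V s 0, fun i j => KillingAux.bt V i j 0,
      fun i => KillingAux.ac V i 0, fun m => ?_⟩
    rw [KillingAux.forward_formula hV hK m]
    rfl
  · rintro ⟨ν, η, k, h⟩ m α β
    have hVK : V = KillingAux.KF n ν η k := funext fun m' => by rw [h m']; rfl
    rw [hVK]
    exact KillingAux.lie_KF_zero ν η k m α β
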